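/- Let G be a graph with k + ℓ ≥ 2, and suppose S ⊆ V(G) is a q-dominating set with |S| ≤ k and |N^p_G(S)| ≤ ℓ, where p > q/2. Let Y = {y ∈ V(G) : |N^p_G[y]| ≤ k + ℓ}. Then |Y| ≤ k · (k+ℓ)^q. -/

import Mathlib

/-- `distLE G p u v`: distance at most `p` between `u` and `v` in `G`. -/
def distLE {V : Type*} (G : SimpleGraph V) (p : ℕ) (u v : V) : Prop :=
  ∃ w : G.Walk u v, w.length ≤ p

/-- Distance-`p` closed neighborhood `N^p_G[S]`. -/
def ballClosed {V : Type*} (G : SimpleGraph V) (p : ℕ) (S : Set V) : Set V :=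
  {v | ∃ u ∈ S, distLE G p u v}

/-- Distance-`p` open neighborhood `N^p_G(S)`. -/
def ballOpen {V : Type*} (G : SimpleGraph V) (p : ℕ) (S : Set V) : Set V :=
  ballClosed G p S \ S

/-- Vertices reachable from `s` by a walk of length `≤ n` all of whose
vertices have degree at most `D`. -/
def Reach {V : Type*} (G : SimpleGraph V) (D : ℕ) (s : V) (n : ℕ) : Set V :=
  {v | ∃ w : G.Walk s v, w.length ≤ n ∧ ∀ x ∈ w.support, (G.neighborSet x).ncard ≤ D}

lemma reach_zero {V : Type*} (G : SimpleGraph V) (D : ℕ) (s : V) :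
    Reach G D s 0 ⊆ {s} := by
  rintro v ⟨w, hl, -⟩
  have := w.eq_of_length_eq_zero (Nat.le_zero.mp hl)
  simp [this.symm]

lemma reach_succ_aux {V : Type*} {G : SimpleGraph V} {D n : ℕ} {s v : V}
    (w' : G.Walk v s) (hl : w'.length ≤ n + 1)
    (hd : ∀ x ∈ w'.support, (G.neighborSet x).ncard ≤ D) :
    v ∈ ⋃ u ∈ Reach G D s n, insert u (G.neighborSet u) := by
  cases w' with
  | nil =>
      have h1 : s ∈ Reach G D s n :=
        ⟨SimpleGraph.Walk.nil, by simp, hd⟩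
      exact Set.mem_biUnion h1 (Set.mem_insert _ _)
  | @cons _ u _ h t =>
      have h1 : u ∈ Reach G D s n := by
        refine ⟨t.reverse, ?_, ?_⟩
        · rw [SimpleGraph.Walk.length_reverse]
          simpa using Nat.lt_succ_iff.mp (Nat.lt_of_lt_of_le (by simp) hl)
        · intro x hx
          apply hd
          rw [SimpleGraph.Walk.support_reverse, List.mem_reverse] at hx
          rw [SimpleGraph.Walk.support_cons]
          exact List.mem_cons_of_mem _ hx
      exact Set.mem_biUnion h1 (Set.mem_insert_of_mem _ (h.symm : G.Adj u v))


lemma ncard_biUnion_le {V W : Type*} [Fintype V] [Fintype W] (s : Set V)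
    (f : V → Set W) (m : ℕ) (h : ∀ u ∈ s, (f u).ncard ≤ m) :
    (⋃ u ∈ s, f u).ncard ≤ s.ncard * m := by
  classical
  have hs : (⋃ u ∈ s, f u) = ↑(s.toFinset.biUnion fun u => (f u).toFinset) := by
    ext x; simp [Set.mem_toFinset]
  rw [hs, Set.ncard_coe_finset]
  calc (s.toFinset.biUnion fun u => (f u).toFinset).card ≤ s.toFinset.card * m := by
        apply Finset.card_biUnion_le_card_mul
        intro u hu
        rw [← Set.ncard_eq_toFinset_card']
        exact h u (Set.mem_toFinset.mp hu)
    _ = s.ncard * m := by rw [Set.ncard_eq_toFinset_card']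

lemma reach_card {V : Type*} [Fintype V] (G : SimpleGraph V) (D : ℕ) (s : V) :
    ∀ n, (Reach G D s n).ncard ≤ (D + 1) ^ n := by
  intro n
  induction n with
  | zero =>
      simpa using Set.ncard_le_ncard (reach_zero G D s) (Set.toFinite _)
  | succ n ih =>
      have hsub : Reach G D s (n + 1) ⊆ ⋃ u ∈ Reach G D s n, insert u (G.neighborSet u) := by
        rintro v ⟨w, hl, hd⟩
        refine reach_succ_aux w.reverse (by simpa using hl) ?_
        intro x hx
        apply hd
        rw [SimpleGraph.Walk.support_reverse, List.mem_reverse] at hx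
        exact hx
      calc (Reach G D s (n + 1)).ncard
          ≤ (⋃ u ∈ Reach G D s n, insert u (G.neighborSet u)).ncard :=
            Set.ncard_le_ncard hsub (Set.toFinite _)
        _ ≤ (Reach G D s n).ncard * (D + 1) := by
            apply ncard_biUnion_le
            rintro u ⟨w, hl, hd⟩
            have hu : (G.neighborSet u).ncard ≤ D := hd u w.end_mem_support
            calc (insert u (G.neighborSet u)).ncard ≤ (G.neighborSet u).ncard + 1 :=
                  Set.ncard_insert_le _ _
              _ ≤ D + 1 := by omega
        _ ≤ (D + 1) ^ n * (D + 1) := Nat.mul_le_mul_right _ ih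
        _ = (D + 1) ^ (n + 1) := (pow_succ _ _).symm

theorem small_secluded_qdom_candidates_bound {V : Type*} [Fintype V]
    (G : SimpleGraph V) (p q k ℓ : ℕ) (S : Set V)
    (hpq : q < 2 * p) (hkl : 2 ≤ k + ℓ)
    (hdom : ballClosed G q S = Set.univ)
    (hS : S.ncard ≤ k)
    (hnb : (ballOpen G p S).ncard ≤ ℓ) :
    {y : V | (ballClosed G p {y}).ncard ≤ k + ℓ}.ncard ≤ k * (k + ℓ) ^ q := by
  classical
  set D := k + ℓ - 1 with hD
  have hD1 : D + 1 = k + ℓ := by omega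
  -- the closed ball around S has size at most k + ℓ
  have hball : (ballClosed G p S).ncard ≤ k + ℓ := by
    have : ballClosed G p S ⊆ S ∪ ballOpen G p S := by
      intro z hz
      by_cases h : z ∈ S
      · exact Or.inl h
      · exact Or.inr ⟨hz, h⟩
    calc (ballClosed G p S).ncard ≤ (S ∪ ballOpen G p S).ncard :=
          Set.ncard_le_ncard this (Set.toFinite _)
      _ ≤ S.ncard + (ballOpen G p S).ncard := Set.ncard_union_le _ _
      _ ≤ k + ℓ := Nat.add_le_add hS hnb
  -- main inclusion
  have hsub : {y : V | (ballClosed G p {y}).ncard ≤ k + ℓ} ⊆ ⋃ s ∈ S, Reach G D s q := by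
    intro y hy
    have hyu : y ∈ ballClosed G q S := by rw [hdom]; trivial
    obtain ⟨s, hsS, w, hwl⟩ := hyu
    refine Set.mem_biUnion hsS ⟨w, hwl, ?_⟩
    intro x hx
    have hsplit := congr_arg SimpleGraph.Walk.length (w.take_spec hx)
    rw [SimpleGraph.Walk.length_append] at hsplit
    set a := (w.takeUntil x hx).length
    set b := (w.dropUntil x hx).length
    have hab : a + b ≤ q := by omega
    have key : ∀ T : Set V, insert x (G.neighborSet x) ⊆ T → T.ncard ≤ k + ℓ →
        (G.neighborSet x).ncard ≤ D := by
      intro T hsubT hT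
      have h1 : (insert x (G.neighborSet x)).ncard = (G.neighborSet x).ncard + 1 :=
        Set.ncard_insert_of_notMem (by simp) (Set.toFinite _)
      have h2 := Set.ncard_le_ncard hsubT (Set.toFinite _)
      omega
    rcases lt_or_ge a p with ha | ha
    · -- x is close to s : use the ball around S
      refine key (ballClosed G p S) ?_ hball
      intro z hz
      rcases Set.mem_insert_iff.mp hz with rfl | hz
      · exact ⟨s, hsS, w.takeUntil z hx, by omega⟩
      · exact ⟨s, hsS, (w.takeUntil x hx).concat ((G.mem_neighborSet x z).mp hz),
          by rw [SimpleGraph.Walk.length_concat]; omega⟩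
    · -- x is close to y : use the ball around y
      have hb : b < p := by omega
      refine key (ballClosed G p {y}) ?_ hy
      intro z hz
      rcases Set.mem_insert_iff.mp hz with rfl | hz
      · exact ⟨y, rfl, (w.dropUntil z hx).reverse, by
          rw [SimpleGraph.Walk.length_reverse]; omega⟩
      · exact ⟨y, rfl, ((w.dropUntil x hx).reverse).concat ((G.mem_neighborSet x z).mp hz), by
          rw [SimpleGraph.Walk.length_concat, SimpleGraph.Walk.length_reverse]; omega⟩
  calc {y : V | (ballClosed G p {y}).ncard ≤ k + ℓ}.ncard
      ≤ (⋃ s ∈ S, Reach G D s q).ncard := Set.ncard_le_ncard hsub (Set.toFinite _)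
    _ ≤ S.ncard * (D + 1) ^ q := ncard_biUnion_le _ _ _ (fun s _ => reach_card G D s q)
    _ ≤ k * (k + ℓ) ^ q := by rw [hD1]; exact Nat.mul_le_mul_right _ hS
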